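/- Let Ω = (-π/2, π/2) × ℝ ⊂ ℝ². For every C¹ function u with compact support in Ω, (1/4) ∫_Ω u(x,y)² / cos²(x) dx dy ≤ ∫_Ω |∇u(x,y)|² dx dy. -/

import Mathlib

open Real MeasureTheory

set_option maxHeartbeats 1000000

theorem stmt2 (u : EuclideanSpace ℝ (Fin 2) → ℝ)
    (hu : ContDiff ℝ 1 u) (hcs : HasCompactSupport u)
    (hsupp : tsupport u ⊆ {z : EuclideanSpace ℝ (Fin 2) | z 0 ∈ Set.Ioo (-(π/2)) (π/2)}) :
    (1/4) * ∫ z in {z : EuclideanSpace ℝ (Fin 2) | z 0 ∈ Set.Ioo (-(π/2)) (π/2)},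
        u z ^ 2 / Real.cos (z 0) ^ 2 ≤
      ∫ z in {z : EuclideanSpace ℝ (Fin 2) | z 0 ∈ Set.Ioo (-(π/2)) (π/2)},
        ‖gradient u z‖ ^ 2 := by
  classical
  set S : Set (EuclideanSpace ℝ (Fin 2)) := {z | z 0 ∈ Set.Ioo (-(π/2)) (π/2)} with hS
  have hSopen : IsOpen S :=
    isOpen_Ioo.preimage (EuclideanSpace.proj (0 : Fin 2)).continuous
  have hSmeas : MeasurableSet S := hSopen.measurableSet
  set v : EuclideanSpace ℝ (Fin 2) := EuclideanSpace.single (0 : Fin 2) (1:ℝ) with hv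
  have hproj_v : (EuclideanSpace.proj (0:Fin 2) :
      EuclideanSpace ℝ (Fin 2) →L[ℝ] ℝ) v = 1 := by simp [hv]
  have hudiff : Differentiable ℝ u := hu.differentiable one_ne_zero
  have hu0 : ∀ z ∉ tsupport u, u z = 0 := fun z hz => image_eq_zero_of_notMem_tsupport hz
  have hp0 : ∀ z ∉ tsupport u, fderiv ℝ u z = 0 := fun z hz =>
    image_eq_zero_of_notMem_tsupport (fun h => hz (tsupport_fderiv_subset ℝ h))
  set w : EuclideanSpace ℝ (Fin 2) → ℝ :=
    fun z => u z * ((-1/2) * Real.tan (z 0)) with hw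
  have hcos : ∀ z ∈ S, Real.cos (z 0) ≠ 0 := fun z hz => (Real.cos_pos_of_mem_Ioo hz).ne'
  have htan : ∀ z ∈ S, HasFDerivAt (fun y : EuclideanSpace ℝ (Fin 2) => Real.tan (y 0))
      ((1 / Real.cos (z 0) ^ 2) • (EuclideanSpace.proj (0:Fin 2) :
        EuclideanSpace ℝ (Fin 2) →L[ℝ] ℝ)) z := by
    intro z hz
    have hproj : HasFDerivAt (fun y : EuclideanSpace ℝ (Fin 2) => y 0)
        (EuclideanSpace.proj (0:Fin 2) : EuclideanSpace ℝ (Fin 2) →L[ℝ] ℝ) z := by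
      have h2 := (EuclideanSpace.proj (0:Fin 2) :
        EuclideanSpace ℝ (Fin 2) →L[ℝ] ℝ).hasFDerivAt (x := z)
      convert h2 using 2
      rfl
    exact (Real.hasDerivAt_tan (hcos z hz)).comp_hasFDerivAt z hproj
  have hwd : ∀ z ∈ S, HasFDerivAt w
      (u z • ((-1/2 : ℝ) • ((1 / Real.cos (z 0) ^ 2) • (EuclideanSpace.proj (0:Fin 2) :
          EuclideanSpace ℝ (Fin 2) →L[ℝ] ℝ)))
        + ((-1/2) * Real.tan (z 0)) • fderiv ℝ u z) z := by
    intro z hz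
    exact (hudiff z).hasFDerivAt.mul ((htan z hz).const_mul (-1/2 : ℝ))
  have hfw : ∀ z ∈ S, fderiv ℝ w z v
      = u z * ((-1/2) * (1 / Real.cos (z 0) ^ 2))
        + ((-1/2) * Real.tan (z 0)) * fderiv ℝ u z v := by
    intro z hz
    rw [(hwd z hz).fderiv]
    simp [hproj_v]
  have hnotS : ∀ z ∉ S, z ∉ tsupport u := fun z hz h => hz (hsupp h)
  have hw0 : ∀ z ∉ tsupport u, w z = 0 := fun z hz => by simp [hw, hu0 z hz]
  have hzero_ev : ∀ z ∉ tsupport u, w =ᶠ[nhds z] (fun _ => (0:ℝ)) := by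
    intro z hz
    filter_upwards [(isOpen_compl_iff.2 (isClosed_tsupport u)).mem_nhds hz] with y hy
    simp [hw, hu0 y hy]
  have hcw : ContDiff ℝ 1 w := by
    rw [contDiff_iff_contDiffAt]
    intro z
    by_cases hz : z ∈ S
    · have h2 : ContDiffAt ℝ 1 (fun y : EuclideanSpace ℝ (Fin 2) => y 0) z := by
        have h3 := ((EuclideanSpace.proj (0:Fin 2) :
          EuclideanSpace ℝ (Fin 2) →L[ℝ] ℝ).contDiff (n := 1)).contDiffAt (x := z)
        convert h3 using 2
        rfl
      have h1 : ContDiffAt ℝ 1 (fun y : EuclideanSpace ℝ (Fin 2) => Real.tan (y 0)) z :=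
        ContDiffAt.comp (g := Real.tan) z (Real.contDiffAt_tan.2 (hcos z hz)) h2
      exact hu.contDiffAt.mul (contDiffAt_const.mul h1)
    · exact (contDiffAt_const (c := (0:ℝ))).congr_of_eventuallyEq (hzero_ev z (hnotS z hz))
  have hdw : Differentiable ℝ w := hcw.differentiable one_ne_zero
  have hwc : HasCompactSupport w := HasCompactSupport.intro hcs hw0
  have hfuc : Continuous fun z => fderiv ℝ u z v :=
    (hu.continuous_fderiv one_ne_zero).clm_apply continuous_const
  have hfwc : Continuous fun z => fderiv ℝ w z v :=
    (hcw.continuous_fderiv one_ne_zero).clm_apply continuous_const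
  have hfw0 : ∀ z ∉ tsupport u, fderiv ℝ w z = 0 := by
    intro z hz
    have h4 : fderiv ℝ w z = fderiv ℝ (fun _ => (0:ℝ)) z :=
      Filter.EventuallyEq.fderiv_eq (hzero_ev z hz)
    rw [h4, fderiv_const_apply]
  -- integrability
  have int1 : Integrable (fun z => fderiv ℝ u z v * w z) :=
    (hfuc.mul hcw.continuous).integrable_of_hasCompactSupport
      (HasCompactSupport.intro hcs fun x hx => by simp [hw0 x hx])
  have int2 : Integrable (fun z => u z * fderiv ℝ w z v) :=
    (hu.continuous.mul hfwc).integrable_of_hasCompactSupport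
      (HasCompactSupport.intro hcs fun x hx => by simp [hu0 x hx])
  have int3 : Integrable (fun z => u z * w z) :=
    (hu.continuous.mul hcw.continuous).integrable_of_hasCompactSupport
      (HasCompactSupport.intro hcs fun x hx => by simp [hu0 x hx])
  have hibp : ∫ z, u z * fderiv ℝ w z v = - ∫ z, fderiv ℝ u z v * w z :=
    integral_mul_fderiv_eq_neg_fderiv_mul_of_integrable int1 int2 int3 (fun x _ => hudiff x) (fun x _ => hdw x)
  set D : EuclideanSpace ℝ (Fin 2) → ℝ :=
    fun z => u z * fderiv ℝ w z v + fderiv ℝ u z v * w z with hD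
  have hD0 : ∫ z, D z = 0 := by
    rw [hD]
    rw [integral_add int2 int1, hibp]
    ring
  have hDvan : ∀ z ∉ S, D z = 0 := by
    intro z hz
    have h1 := hnotS z hz
    simp [hD, hu0 z h1, hw0 z h1, hp0 z h1, hfw0 z h1]
  have hDset : ∫ z in S, D z = ∫ z, D z :=
    setIntegral_eq_integral_of_forall_compl_eq_zero hDvan
  -- H and Gr
  set H : EuclideanSpace ℝ (Fin 2) → ℝ := fun z => u z ^ 2 / Real.cos (z 0) ^ 2 with hHdef
  set Gr : EuclideanSpace ℝ (Fin 2) → ℝ := fun z => ‖gradient u z‖ ^ 2 with hGrdef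
  have hH0 : ∀ z ∉ tsupport u, H z = 0 := fun z hz => by simp [hHdef, hu0 z hz]
  have hHcont : Continuous H := by
    rw [continuous_iff_continuousAt]
    intro z
    by_cases hz : z ∈ S
    · exact ((hu.continuous.pow 2).continuousAt).div
        (((Real.continuous_cos.comp (EuclideanSpace.proj (0:Fin 2)).continuous).pow
          2).continuousAt) (pow_ne_zero 2 (hcos z hz))
    · have hev : H =ᶠ[nhds z] 0 := by
        filter_upwards [(isOpen_compl_iff.2 (isClosed_tsupport u)).mem_nhds (hnotS z hz)]
          with y hy
        simp [hHdef, hu0 y hy]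
      exact ContinuousAt.congr continuousAt_const hev.symm
  have intH : Integrable H :=
    hHcont.integrable_of_hasCompactSupport (HasCompactSupport.intro hcs hH0)
  have hgradeq : ∀ z, gradient u z = (InnerProductSpace.toDual ℝ _).symm (fderiv ℝ u z) :=
    fun z => rfl
  have hgradc : Continuous (gradient u) := by
    simp only [funext hgradeq]
    exact (InnerProductSpace.toDual ℝ _).symm.continuous.comp (hu.continuous_fderiv one_ne_zero)
  have hgrad0 : ∀ z ∉ tsupport u, Gr z = 0 := by
    intro z hz
    simp [hGrdef, hgradeq z, hp0 z hz]
  have intGr : Integrable Gr :=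
    ((hgradc.norm).pow 2).integrable_of_hasCompactSupport
      (HasCompactSupport.intro hcs hgrad0)
  have intD : Integrable D :=
    (int2.add int1)
  -- pointwise inequality on S
  have key : ∀ z ∈ S, (1/4) * H z + D z ≤ Gr z := by
    intro z hz
    have hc := hcos z hz
    have hpz : fderiv ℝ u z v ^ 2 ≤ Gr z := by
      have h1 : fderiv ℝ u z v = inner ℝ (gradient u z) v := by
        rw [hgradeq z]
        exact (InnerProductSpace.toDual_symm_apply).symm
      have h2 : |(inner ℝ (gradient u z) v : ℝ)| ≤ ‖gradient u z‖ * ‖v‖ :=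
        abs_real_inner_le_norm _ _
      have h3 : ‖v‖ = 1 := by simp [hv]
      rw [h3, mul_one] at h2
      show fderiv ℝ u z v ^ 2 ≤ ‖gradient u z‖ ^ 2
      calc fderiv ℝ u z v ^ 2 = |(inner ℝ (gradient u z) v : ℝ)| ^ 2 := by rw [h1, sq_abs]
        _ ≤ ‖gradient u z‖ ^ 2 := pow_le_pow_left₀ (abs_nonneg _) h2 2
    have htan2 : Real.tan (z 0) ^ 2 + 1 = 1 / Real.cos (z 0) ^ 2 := by
      rw [Real.tan_eq_sin_div_cos]
      field_simp
      exact Real.sin_sq_add_cos_sq _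
    have hHz : H z = u z ^ 2 * (Real.tan (z 0) ^ 2 + 1) := by
      rw [hHdef, htan2]
      field_simp
    have hDz : D z = u z * (u z * ((-1/2) * (1 / Real.cos (z 0) ^ 2))
        + ((-1/2) * Real.tan (z 0)) * fderiv ℝ u z v)
        + fderiv ℝ u z v * (u z * ((-1/2) * Real.tan (z 0))) := by
      show u z * fderiv ℝ w z v + fderiv ℝ u z v * w z = _
      rw [hfw z hz]
    rw [hDz, hHz, ← htan2]
    nlinarith [sq_nonneg (fderiv ℝ u z v + Real.tan (z 0) * u z / 2), sq_nonneg (u z), hpz]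
  -- assemble
  have intHS : IntegrableOn (fun z => (1/4) * H z) S := (intH.const_mul _).integrableOn
  have intDS : IntegrableOn D S := intD.integrableOn
  have m1 : ∫ z in S, ((1/4) * H z + D z) ≤ ∫ z in S, Gr z :=
    setIntegral_mono_on (intHS.add intDS) intGr.integrableOn hSmeas key
  have m2 : ∫ z in S, ((1/4) * H z + D z) = (1/4) * (∫ z in S, H z) + ∫ z in S, D z := by
    rw [integral_add intHS intDS, integral_const_mul]
  rw [m2, hDset, hD0, add_zero] at m1
  exact m1
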